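/- Every upward-closed language over a finite alphabet (with respect to the subword ordering) is a finite union of piece languages, i.e., sets of the form Σ* a₁ Σ* a₂ ⋯ Σ* aₙ Σ* with a₁,…,aₙ ∈ Σ. In particular, every upward-closed language is regular. -/

import Mathlib

/-- The piece language `Σ* a₁ Σ* a₂ ⋯ Σ* aₙ Σ*` associated with the word `a₁a₂⋯aₙ`. -/
def pieceLang {A : Type*} : List A → Set (List A)
  | [] => Set.univ
  | a :: w => {v | ∃ p q : List A, v = p ++ a :: q ∧ q ∈ pieceLang w}

open List

lemma pieceLang_eq_sublist {A : Type*} (w : List A) : pieceLang w = {v | w <+ v} := by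
  induction w with
  | nil =>
    ext v; simp [pieceLang]
  | cons a w ih =>
    ext v
    simp only [pieceLang, Set.mem_setOf_eq, ih]
    constructor
    · rintro ⟨p, q, rfl, hq⟩
      exact (cons_sublist_cons.2 hq).trans (sublist_append_right _ _)
    · intro h
      induction v with
      | nil => exact absurd h (by simp)
      | cons b v ihv =>
        rcases cons_sublist_cons'.1 h with h' | ⟨rfl, hw⟩
        · obtain ⟨p, q, rfl, hq⟩ := ihv h'
          exact ⟨b :: p, q, rfl, hq⟩
        · exact ⟨[], v, rfl, hw⟩

lemma exists_minimal_aux {A : Type*} (U : Set (List A)) :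
    ∀ n (u : List A), u.length ≤ n → u ∈ U →
      ∃ m ∈ U, m <+ u ∧ ∀ v ∈ U, v <+ m → v = m := by
  intro n
  induction n with
  | zero =>
    intro u hlen hu
    have : u = [] := by
      cases u with
      | nil => rfl
      | cons a t => simp at hlen
    subst this
    exact ⟨[], hu, Sublist.refl _, fun v _ hv => sublist_nil.1 hv⟩
  | succ n ih =>
    intro u hlen hu
    by_cases h : ∀ v ∈ U, v <+ u → v = u
    · exact ⟨u, hu, Sublist.refl u, h⟩
    · push_neg at h
      obtain ⟨v, hv, hvu, hne⟩ := h
      have hlt : v.length < u.length := by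
        rcases lt_or_eq_of_le hvu.length_le with h' | h'
        · exact h'
        · exact absurd (hvu.eq_of_length h') hne
      obtain ⟨m, hm, hmv, hmin⟩ := ih v (by omega) hv
      exact ⟨m, hm, hmv.trans hvu, hmin⟩

lemma sublist_pwo {A : Type*} [Finite A] :
    (Set.univ : Set (List A)).PartiallyWellOrderedOn (· <+ ·) := by
  have h1 : (Set.univ : Set A).PartiallyWellOrderedOn (· = ·) :=
    Set.finite_univ.partiallyWellOrderedOn
  have h2 := Set.PartiallyWellOrderedOn.partiallyWellOrderedOn_sublistForall₂ (· = ·) h1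
  have hset : { l : List A | ∀ x, x ∈ l → x ∈ (Set.univ : Set A) } = Set.univ := by
    ext l; simp
  rw [hset] at h2
  intro f
  obtain ⟨m, n, hmn, h⟩ := h2 f
  refine ⟨m, n, hmn, ?_⟩
  change SublistForall₂ (· = ·) (f m).1 (f n).1 at h
  change (f m).1 <+ (f n).1
  rw [List.sublistForall₂_iff] at h
  obtain ⟨l, hl, hsub⟩ := h
  have heq : (f m).1 = l := by
    have := List.forall₂_eq_eq_eq (α := A) ▸ hl
    exact this
  exact heq ▸ hsub

open Classical in
/-- The DFA recognizing `{v | w <+ v}`. -/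
noncomputable def pieceDFA {A : Type*} (w : List A) : DFA A (Fin (w.length + 1)) where
  step s a := if h : (s : ℕ) < w.length then
      (if w.get ⟨s, h⟩ = a then ⟨s + 1, by omega⟩ else s) else s
  start := 0
  accept := {Fin.last w.length}

open Classical in
lemma pieceDFA_evalFrom {A : Type*} (w : List A) (v : List A) :
    ∀ s : Fin (w.length + 1),
      ((pieceDFA w).evalFrom s v ∈ (pieceDFA w).accept ↔ w.drop s <+ v) := by
  induction v with
  | nil =>
    intro s
    have hs : s.val ≤ w.length := by omega
    show s ∈ ({Fin.last w.length} : Set _) ↔ _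
    simp only [Set.mem_singleton_iff, sublist_nil, drop_eq_nil_iff]
    constructor
    · rintro rfl; simp
    · intro h
      have := s.isLt
      refine Fin.ext ?_
      rw [Fin.val_last]
      omega
  | cons a v ih =>
    intro s
    have hev : (pieceDFA w).evalFrom s (a :: v) =
        (pieceDFA w).evalFrom ((pieceDFA w).step s a) v := rfl
    rw [hev]
    by_cases h : (s : ℕ) < w.length
    · have hdrop : w.drop s = w.get ⟨s, h⟩ :: w.drop (s + 1) := by
        rw [← List.getElem_cons_drop h]; rfl
      by_cases ha : w.get ⟨s, h⟩ = a
      · have hstep : (pieceDFA w).step s a = ⟨s + 1, by omega⟩ := by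
          show (if h' : (s : ℕ) < w.length then
              (if w.get ⟨s, h'⟩ = a then (⟨(s : ℕ) + 1, by omega⟩ : Fin (w.length + 1)) else s)
            else s) = _
          rw [dif_pos h, if_pos ha]
        rw [hstep, ih]
        rw [hdrop, ha]
        exact cons_sublist_cons.symm
      · have hstep : (pieceDFA w).step s a = s := by
          show (if h' : (s : ℕ) < w.length then
              (if w.get ⟨s, h'⟩ = a then (⟨(s : ℕ) + 1, by omega⟩ : Fin (w.length + 1)) else s)
            else s) = _
          rw [dif_pos h, if_neg ha]
        rw [hstep, ih]
        rw [hdrop]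
        constructor
        · intro hs; exact hs.trans (sublist_cons_self a v)
        · intro hs
          rcases cons_sublist_cons'.1 hs with h' | ⟨he, _⟩
          · exact h'
          · exact absurd he ha
    · have hstep : (pieceDFA w).step s a = s := by
        show (if h' : (s : ℕ) < w.length then
            (if w.get ⟨s, h'⟩ = a then (⟨(s : ℕ) + 1, by omega⟩ : Fin (w.length + 1)) else s)
          else s) = _
        rw [dif_neg h]
      have hdrop : w.drop s = [] := by
        rw [drop_eq_nil_iff]; omega
      rw [hstep, ih, hdrop]
      simp

lemma pieceLang_regular {A : Type*} (w : List A) :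
    Language.IsRegular (pieceLang w : Language A) := by
  refine ⟨Fin (w.length + 1), inferInstance, pieceDFA w, ?_⟩
  ext v
  rw [DFA.mem_accepts]
  show (pieceDFA w).evalFrom (pieceDFA w).start v ∈ (pieceDFA w).accept ↔ _
  rw [pieceDFA_evalFrom w v (pieceDFA w).start]
  have : (pieceDFA w).start = (0 : Fin (w.length + 1)) := rfl
  rw [this]
  show w.drop 0 <+ v ↔ _
  rw [List.drop_zero, pieceLang_eq_sublist]
  rfl

lemma isRegular_empty {A : Type*} :
    Language.IsRegular ((∅ : Set (List A)) : Language A) := by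
  refine ⟨Unit, inferInstance, ⟨fun _ _ => (), (), ∅⟩, ?_⟩
  ext v
  rw [DFA.mem_accepts]
  simp
  exact fun h => h

lemma isRegular_union {A : Type*} {L₁ L₂ : Set (List A)}
    (h₁ : Language.IsRegular (L₁ : Language A))
    (h₂ : Language.IsRegular (L₂ : Language A)) :
    Language.IsRegular ((L₁ ∪ L₂ : Set (List A)) : Language A) := by
  obtain ⟨σ, _, M, rfl⟩ := h₁
  obtain ⟨τ, _, N, rfl⟩ := h₂
  refine ⟨σ × τ, inferInstance,
    ⟨fun p a => (M.step p.1 a, N.step p.2 a), (M.start, N.start),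
      {p | p.1 ∈ M.accept ∨ p.2 ∈ N.accept}⟩, ?_⟩
  have key : ∀ (v : List A) (s : σ) (t : τ),
      (DFA.mk (fun (p : σ × τ) a => (M.step p.1 a, N.step p.2 a)) (M.start, N.start)
        {p | p.1 ∈ M.accept ∨ p.2 ∈ N.accept}).evalFrom (s, t) v =
        (M.evalFrom s v, N.evalFrom t v) := by
    intro v
    induction v with
    | nil => intro s t; rfl
    | cons a v ih => intro s t; exact ih (M.step s a) (N.step t a)
  ext v
  rw [DFA.mem_accepts]
  show (DFA.mk _ _ _).evalFrom (M.start, N.start) v ∈ _ ↔ _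
  rw [key v M.start N.start]
  show (M.evalFrom M.start v ∈ M.accept ∨ N.evalFrom N.start v ∈ N.accept) ↔ _
  change _ ↔ (_ ∨ _)
  exact Iff.rfl

theorem upwardClosed_eq_finite_union_pieces {A : Type*} [Finite A] (U : Set (List A))
    (hU : ∀ u ∈ U, ∀ v : List A, u.Sublist v → v ∈ U) :
    (∃ F : Finset (List A), U = ⋃ w ∈ F, pieceLang w) ∧
      Language.IsRegular (U : Language A) := by
  classical
  set M : Set (List A) := {m ∈ U | ∀ v ∈ U, v <+ m → v = m} with hM
  have hanti : IsAntichain (· <+ ·) M := by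
    intro m₁ hm₁ m₂ hm₂ hne hle
    exact hne (hm₂.2 m₁ hm₁.1 hle)
  have hMfin : M.Finite :=
    hanti.finite_of_partiallyWellOrderedOn (sublist_pwo.mono (Set.subset_univ M))
  have hUeq : U = ⋃ w ∈ hMfin.toFinset, pieceLang w := by
    ext u
    simp only [Set.mem_iUnion, Set.Finite.mem_toFinset, exists_prop]
    constructor
    · intro hu
      obtain ⟨m, hm, hmu, hmin⟩ := exists_minimal_aux U u.length u le_rfl hu
      exact ⟨m, ⟨hm, hmin⟩, by rw [pieceLang_eq_sublist]; exact hmu⟩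
    · rintro ⟨m, hm, hu⟩
      rw [pieceLang_eq_sublist] at hu
      exact hU m hm.1 u hu
  refine ⟨⟨hMfin.toFinset, hUeq⟩, ?_⟩
  rw [hUeq]
  have : ∀ F : Finset (List A),
      Language.IsRegular ((⋃ w ∈ F, pieceLang w : Set (List A)) : Language A) := by
    intro F
    induction F using Finset.induction with
    | empty =>
      have h0 : (⋃ w ∈ (∅ : Finset (List A)), pieceLang w) = (∅ : Set (List A)) := by simp
      rw [h0]; exact isRegular_empty
    | insert x s hx ih =>
      rw [Finset.set_biUnion_insert]
      exact isRegular_union (pieceLang_regular _) ih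
  exact this _
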